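/- Every subset of ℤ definable with parameters in the structure (ℤ,<,+), viewed as a structure in the language of ordered abelian groups, is eventually periodic. -/

import Mathlib

open FirstOrder

/-- Function symbols of the language of ordered abelian groups:
a constant `0`, a unary `-`, and a binary `+`. -/
inductive OagFunc : ℕ → Type
  | zero : OagFunc 0
  | neg : OagFunc 1
  | add : OagFunc 2

/-- Relation symbols of the language of ordered abelian groups: a binary `<`. -/
inductive OagRel : ℕ → Type
  | lt : OagRel 2

/-- The language of ordered abelian groups. -/
def Log : FirstOrder.Language := ⟨OagFunc, OagRel⟩

/-- Every linearly ordered abelian group is an `Log`-structure in the natural way. -/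
instance (G : Type*) [AddCommGroup G] [LinearOrder G] [IsOrderedAddMonoid G] : Log.Structure G where
  funMap {_} f x :=
    match f with
    | OagFunc.zero => 0
    | OagFunc.neg => -(x 0)
    | OagFunc.add => x 0 + x 1
  RelMap {_} r x :=
    match r with
    | OagRel.lt => x 0 < x 1

/-- `A ⊆ ℤ` is eventually periodic. -/
def EvPeriodic (A : Set ℤ) : Prop :=
  ∃ n : ℤ, 0 < n ∧ ∃ m m' : ℤ,
    (∀ k : ℤ, m ≤ k → (k ∈ A ↔ k + n ∈ A)) ∧
    (∀ k : ℤ, k ≤ m' → (k ∈ A ↔ k - n ∈ A))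

section PresburgerClass

variable {α : Type} [Fintype α]

/-- Affine functional evaluation. -/
def aeval (a : α → ℤ) (c : ℤ) (v : α → ℤ) : ℤ := (∑ i, a i * v i) + c

/-- Generator data: a halfspace (`ineq = true`) `aeval a c v ≤ 0`, or a congruence
(`ineq = false`) `d ∣ aeval a c v`. -/
structure GenData (α : Type) : Type where
  ineq : Bool
  d : ℤ
  hd : d ≠ 0
  a : α → ℤ
  c : ℤ

def GenData.toSet (g : GenData α) : Set (α → ℤ) :=
  if g.ineq then {v | aeval g.a g.c v ≤ 0} else {v | g.d ∣ aeval g.a g.c v}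

/-- The class of "Presburger" subsets of `α → ℤ`. -/
inductive Pres (α : Type) [Fintype α] : Set (α → ℤ) → Prop
  | gen (g : GenData α) : Pres α g.toSet
  | compl {X} : Pres α X → Pres α Xᶜ
  | union {X Y} : Pres α X → Pres α Y → Pres α (X ∪ Y)

theorem Pres.congr {X Y : Set (α → ℤ)} (h : X = Y) (hX : Pres α X) : Pres α Y := h ▸ hX

theorem Pres.hs (a : α → ℤ) (c : ℤ) : Pres α {v | aeval a c v ≤ 0} :=
  (Pres.gen ⟨true, 1, one_ne_zero, a, c⟩).congr (by simp [GenData.toSet])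

theorem Pres.cg {d : ℤ} (hd : d ≠ 0) (a : α → ℤ) (c : ℤ) : Pres α {v | d ∣ aeval a c v} :=
  (Pres.gen ⟨false, d, hd, a, c⟩).congr (by simp [GenData.toSet])

theorem Pres.empty : Pres α (∅ : Set (α → ℤ)) :=
  (Pres.hs (fun _ => 0) 1).congr (by ext v; simp [aeval])

theorem Pres.univ : Pres α (Set.univ : Set (α → ℤ)) :=
  (Pres.hs (fun _ => 0) 0).congr (by ext v; simp [aeval])

theorem Pres.inter {X Y : Set (α → ℤ)} (hX : Pres α X) (hY : Pres α Y) : Pres α (X ∩ Y) :=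
  (hX.compl.union hY.compl).compl.congr (by simp [Set.compl_union])

theorem Pres.iUnion {ι : Type} [Finite ι] {f : ι → Set (α → ℤ)} (h : ∀ i, Pres α (f i)) :
    Pres α (⋃ i, f i) := by
  have := Fintype.ofFinite ι
  have key : ∀ s : Finset ι, Pres α (⋃ i ∈ s, f i) := by
    intro s
    classical
    induction s using Finset.induction_on with
    | empty => simpa using Pres.empty (α := α)
    | @insert a s hx ih => exact ((h a).union ih).congr (by rw [Finset.set_biUnion_insert])
  exact (key Finset.univ).congr (by simp)

theorem Pres.iInter {ι : Type} [Finite ι] {f : ι → Set (α → ℤ)} (h : ∀ i, Pres α (f i)) :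
    Pres α (⋂ i, f i) :=
  (Pres.iUnion fun i => (h i).compl).compl.congr (by simp)

theorem aeval_reindex {β : Type} [Fintype β] (e : α ≃ β) (a : α → ℤ) (c : ℤ) (w : β → ℤ) :
    aeval a c (w ∘ e) = aeval (a ∘ e.symm) c w := by
  unfold aeval
  congr 1
  rw [← Equiv.sum_comp e (fun j => (a ∘ e.symm) j * w j)]
  simp

theorem Pres.reindex {β : Type} [Fintype β] (e : α ≃ β) {X : Set (α → ℤ)} (hX : Pres α X) :
    Pres β {w : β → ℤ | w ∘ e ∈ X} := by
  induction hX with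
  | gen g =>
    rcases g with ⟨i, d, hd, a, c⟩
    cases i
    · exact (Pres.cg hd (a ∘ e.symm) c).congr (by ext w; simp [GenData.toSet, aeval_reindex])
    · exact (Pres.hs (a ∘ e.symm) c).congr (by ext w; simp [GenData.toSet, aeval_reindex])
  | compl _ ih => exact ih.compl.congr (by ext w; simp)
  | union _ _ ih1 ih2 => exact (ih1.union ih2).congr (by ext w; simp)

end PresburgerClass

section DNF
variable {α : Type} [Fintype α]

theorem aeval_shift (a : α → ℤ) (c r : ℤ) (v : α → ℤ) :
    aeval a (c - r) v = aeval a c v - r := by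
  unfold aeval; ring

theorem aeval_neg (a : α → ℤ) (c : ℤ) (v : α → ℤ) :
    aeval (fun i => -(a i)) (1 - c) v = 1 - aeval a c v := by
  unfold aeval
  simp only [neg_mul]
  rw [Finset.sum_neg_distrib]
  ring

theorem not_dvd_iff_shift {d m : ℤ} (hd : d ≠ 0) :
    ¬ (d ∣ m) ↔ ∃ r : Fin (d.natAbs - 1), d ∣ m - ((r : ℤ) + 1) := by
  set e : ℤ := (d.natAbs : ℤ) with he
  have hpos : 0 < e := by simpa [he] using Int.natAbs_pos.mpr hd
  constructor
  · intro h
    set s : ℤ := m % e with hs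
    have h0 : 0 ≤ s := Int.emod_nonneg m (by omega)
    have h1 : s < e := Int.emod_lt_of_pos m hpos
    have hsne : s ≠ 0 := by
      intro h0'
      exact h (Int.natAbs_dvd.mp (Int.dvd_of_emod_eq_zero (by rw [← hs]; exact h0')))
    have hcard : s.toNat - 1 < d.natAbs - 1 := by omega
    refine ⟨⟨s.toNat - 1, hcard⟩, Int.natAbs_dvd.mp ?_⟩
    have : m - ((((s.toNat - 1 : ℕ) : ℤ)) + 1) = m - s := by omega
    rw [this, hs, Int.emod_def]
    ring_nf
    exact Dvd.intro _ rfl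
  · rintro ⟨r, hr⟩ hdm
    have h2 : d ∣ ((r : ℤ) + 1) := by
      have := dvd_sub hdm hr
      simpa using this
    have h3 : e ∣ ((r : ℤ) + 1) := Int.natAbs_dvd.mpr h2
    have h4 : e ≤ (r : ℤ) + 1 := Int.le_of_dvd (by positivity) h3
    have h5 : ((r : ℕ) : ℤ) < e - 1 := by
      have := r.2
      omega
    omega

theorem gen_compl (g : GenData α) :
    ∃ (ρ : Type) (_ : Finite ρ) (h : ρ → GenData α),
      (g.toSet)ᶜ = ⋃ r, (h r).toSet := by
  rcases g with ⟨i, d, hd, a, c⟩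
  cases i
  · refine ⟨Fin (d.natAbs - 1), inferInstance, fun r => ⟨false, d, hd, a, c - ((r : ℤ) + 1)⟩, ?_⟩
    ext v
    simp only [GenData.toSet, Set.mem_compl_iff, Set.mem_setOf_eq, Set.mem_iUnion, aeval_shift,
      Bool.false_eq_true, ↓reduceIte]
    exact not_dvd_iff_shift hd
  · refine ⟨Unit, inferInstance, fun _ => ⟨true, 1, one_ne_zero, fun i => -(a i), 1 - c⟩, ?_⟩
    ext v
    simp only [GenData.toSet, Set.mem_compl_iff, Set.mem_setOf_eq, Set.mem_iUnion, aeval_neg,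
      exists_const, Bool.false_eq_true, ↓reduceIte]
    omega

theorem pres_dnf {X : Set (α → ℤ)} (h : Pres α X) :
    ∃ (ι : Type) (_ : Finite ι) (κ : ι → Type) (_ : ∀ i, Finite (κ i))
      (g : ∀ i, κ i → GenData α), X = ⋃ i, ⋂ j, (g i j).toSet := by
  induction h with
  | gen g =>
    exact ⟨Unit, inferInstance, fun _ => Unit, fun _ => inferInstance, fun _ _ => g,
      by simp [Set.iUnion_const, Set.iInter_const]⟩
  | compl hX ih =>
    obtain ⟨ι, hι, κ, hκ, g, rfl⟩ := ih
    choose ρ hρ hc hcompl using fun (p : Σ i, κ i) => gen_compl (g p.1 p.2)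
    classical
    haveI := hι
    haveI : ∀ i, Finite (κ i) := hκ
    haveI : ∀ p, Finite (ρ p) := hρ
    refine ⟨∀ i, Σ j : κ i, ρ ⟨i, j⟩, ?_, fun _ => ι, fun _ => hι,
      fun f i => hc ⟨i, (f i).1⟩ (f i).2, ?_⟩
    · exact inferInstance
    · rw [Set.compl_iUnion]
      have step : ∀ i : ι, (⋂ j, (g i j).toSet)ᶜ = ⋃ p : Σ j : κ i, ρ ⟨i, j⟩,
          (hc ⟨i, p.1⟩ p.2).toSet := by
        intro i
        rw [Set.compl_iInter]
        rw [Set.iUnion_sigma]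
        exact Set.iUnion_congr fun j => hcompl ⟨i, j⟩
      calc (⋂ i, (⋂ j, (g i j).toSet)ᶜ) = ⋂ i, ⋃ p : Σ j : κ i, ρ ⟨i, j⟩,
              (hc ⟨i, p.1⟩ p.2).toSet := Set.iInter_congr step
        _ = ⋃ f : (∀ i, Σ j : κ i, ρ ⟨i, j⟩), ⋂ i, (hc ⟨i, (f i).1⟩ (f i).2).toSet := by
            simp only [← Set.iSup_eq_iUnion, ← Set.iInf_eq_iInter]
            exact iInf_iSup_eq
  | union hX hY ih1 ih2 =>
    obtain ⟨ι1, hι1, κ1, hκ1, g1, rfl⟩ := ih1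
    obtain ⟨ι2, hι2, κ2, hκ2, g2, rfl⟩ := ih2
    refine ⟨ι1 ⊕ ι2, inferInstance, Sum.elim κ1 κ2, ?_, ?_, ?_⟩
    · rintro (i | i)
      exacts [hκ1 i, hκ2 i]
    · rintro (i | i)
      · exact g1 i
      · exact g2 i
    · rw [Set.iUnion_sum]
      rfl

end DNF

section CooperPrep

theorem aeval_combine {α : Type} [Fintype α] (p q r : ℤ) (a b : α → ℤ) (c d : ℤ) (v : α → ℤ) :
    aeval (fun i => p * a i + q * b i) (p * c + q * d + r) v
      = p * aeval a c v + q * aeval b d v + r := by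
  unfold aeval
  rw [Finset.sum_congr rfl (fun i _ => add_mul (p * a i) (q * b i) (v i)),
    Finset.sum_add_distrib]
  rw [show ∀ S : Finset α, ∑ i ∈ S, p * a i * v i = p * ∑ i ∈ S, a i * v i from
    fun S => by rw [Finset.mul_sum]; exact Finset.sum_congr rfl fun i _ => by ring]
  rw [show ∑ i : α, q * b i * v i = q * ∑ i : α, b i * v i from
    by rw [Finset.mul_sum]; exact Finset.sum_congr rfl fun i _ => by ring]
  ring

theorem aeval_smul {α : Type} [Fintype α] (p r : ℤ) (a : α → ℤ) (c : ℤ) (v : α → ℤ) :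
    aeval (fun i => p * a i) (p * c + r) v = p * aeval a c v + r := by
  unfold aeval
  rw [show ∑ i : α, p * a i * v i = p * ∑ i : α, a i * v i from
    by rw [Finset.mul_sum]; exact Finset.sum_congr rfl fun i _ => by ring]
  ring

theorem mul_nonpos_iff_left {c b : ℤ} (hc : 0 < c) : c * b ≤ 0 ↔ b ≤ 0 := by
  constructor
  · intro h; by_contra hb; push_neg at hb; nlinarith
  · intro h; exact mul_nonpos_of_nonneg_of_nonpos hc.le h

theorem aeval_const {α : Type} [Fintype α] (c : ℤ) (v : α → ℤ) :
    aeval (fun _ => 0) c v = c := by simp [aeval]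

theorem aeval_sum_unit {β : Type} [Fintype β] (a : (β ⊕ Unit) → ℤ) (c : ℤ) (v : β → ℤ) (z : ℤ) :
    aeval a c (Sum.elim v fun _ => z) = a (Sum.inr ()) * z + aeval (a ∘ Sum.inl) c v := by
  unfold aeval
  rw [Fintype.sum_sum_type]
  simp only [Sum.elim_inl, Sum.elim_inr, Finset.univ_unique, Finset.sum_singleton,
    Function.comp]
  ring

theorem sign_mul_max {E L : ℤ} (hL : 0 < L) (h : max 1 |E| ∣ L) :
    E.sign * L = (L / max 1 |E|) * E := by
  rcases lt_trichotomy E 0 with hE | hE | hE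
  · have h2 : max 1 |E| = -E := by rw [abs_of_neg hE]; exact max_eq_right (by omega)
    have h3 := Int.ediv_mul_cancel h
    rw [Int.sign_eq_neg_one_iff_neg.mpr hE]
    rw [h2] at h3 ⊢
    have : L / (-E) * E = -(L / (-E) * (-E)) := by ring
    rw [this, h3]
    ring
  · subst hE; simp
  · have h2 : max 1 |E| = E := by rw [abs_of_pos hE]; exact max_eq_right (by omega)
    have h3 := Int.ediv_mul_cancel h
    rw [Int.sign_eq_one_iff_pos.mpr hE]
    rw [h2] at h3 ⊢
    rw [h3]
    ring

end CooperPrep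

namespace Cooper

variable {β κ : Type} [Fintype β] [Fintype κ] (g : κ → GenData (β ⊕ Unit))

/-- Coefficient of the distinguished variable. -/
def E (j : κ) : ℤ := (g j).a (Sum.inr ())

/-- The `v`-part of the affine functional. -/
def T (j : κ) (v : β → ℤ) : ℤ := aeval ((g j).a ∘ Sum.inl) ((g j).c) v

/-- Common scaling factor. -/
def L : ℤ := ∏ j, max 1 |E g j|

def μ (j : κ) : ℤ := L g / max 1 |E g j|

/-- Common modulus. -/
def D : ℤ := L g * ∏ j, |μ g j * (g j).d|

def Low (j : κ) : Prop := (g j).ineq = true ∧ E g j < 0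

/-- Scaled constraint on `y = L * z`. -/
def Q (j : κ) (v : β → ℤ) (y : ℤ) : Prop :=
  if (g j).ineq then (E g j).sign * y + μ g j * T g j v ≤ 0
  else μ g j * (g j).d ∣ (E g j).sign * y + μ g j * T g j v

theorem L_pos : 0 < L g :=
  Finset.prod_pos fun j _ => lt_of_lt_of_le one_pos (le_max_left _ _)

theorem max_dvd_L (j : κ) : max 1 |E g j| ∣ L g :=
  Finset.dvd_prod_of_mem _ (Finset.mem_univ j)

theorem μ_mul (j : κ) : μ g j * max 1 |E g j| = L g := Int.ediv_mul_cancel (max_dvd_L g j)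

theorem μ_pos (j : κ) : 0 < μ g j := by
  have h1 := μ_mul g j
  have h2 := L_pos g
  have h3 : (1 : ℤ) ≤ max 1 |E g j| := le_max_left _ _
  nlinarith

theorem sign_L (j : κ) : (E g j).sign * L g = μ g j * E g j :=
  sign_mul_max (L_pos g) (max_dvd_L g j)

theorem μd_ne (j : κ) : μ g j * (g j).d ≠ 0 :=
  mul_ne_zero (μ_pos g j).ne' (g j).hd

theorem D_pos : 0 < D g := by
  refine mul_pos (L_pos g) (Finset.prod_pos fun j _ => ?_)
  exact abs_pos.mpr (μd_ne g j)

theorem μd_dvd_D (j : κ) : μ g j * (g j).d ∣ D g := by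
  refine (abs_dvd _ _).mp (Dvd.dvd.mul_left ?_ _)
  exact Finset.dvd_prod_of_mem _ (Finset.mem_univ j)

theorem L_dvd_D : L g ∣ D g := Dvd.intro _ rfl

theorem holds_iff (v : β → ℤ) (z : ℤ) (j : κ) :
    (Sum.elim v fun _ => z) ∈ (g j).toSet ↔ Q g j v (L g * z) := by
  have key : (E g j).sign * (L g * z) + μ g j * T g j v
      = μ g j * (E g j * z + T g j v) := by
    have h1 : (E g j).sign * (L g * z) = (E g j).sign * L g * z := by ring
    rw [h1, sign_L g j]
    ring
  unfold GenData.toSet Q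
  cases hgi : (g j).ineq
  · simp only [Bool.false_eq_true, ↓reduceIte, Set.mem_setOf_eq, key]
    rw [show E g j * z + T g j v = aeval ((g j).a) ((g j).c) (Sum.elim v fun _ => z) from
      (by rw [aeval_sum_unit]; rfl)]
    exact (mul_dvd_mul_iff_left (μ_pos g j).ne').symm
  · simp only [↓reduceIte, Set.mem_setOf_eq, key]
    rw [show E g j * z + T g j v = aeval ((g j).a) ((g j).c) (Sum.elim v fun _ => z) from
      (by rw [aeval_sum_unit]; rfl)]
    exact (mul_nonpos_iff_left (μ_pos g j)).symm

theorem step1 (v : β → ℤ) :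
    (∃ z, ∀ j, (Sum.elim v fun _ => z) ∈ (g j).toSet) ↔
      ∃ y, L g ∣ y ∧ ∀ j, Q g j v y := by
  constructor
  · rintro ⟨z, hz⟩
    exact ⟨L g * z, Dvd.intro _ rfl, fun j => (holds_iff g v z j).mp (hz j)⟩
  · rintro ⟨y, ⟨z, rfl⟩, hQ⟩
    exact ⟨z, fun j => (holds_iff g v z j).mpr (hQ j)⟩

end Cooper

section Cooper2
namespace Cooper

variable {β κ : Type} [Fintype β] [Fintype κ] (g : κ → GenData (β ⊕ Unit))

theorem cooper_pos (v : β → ℤ) (hlow : ∃ k, Low g k) :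
    (∃ y, L g ∣ y ∧ ∀ j, Q g j v y) ↔
      ∃ k, Low g k ∧ ∃ r : ℤ, 0 ≤ r ∧ r < D g ∧ L g ∣ (μ g k * T g k v + r) ∧
        ∀ j, Q g j v (μ g k * T g k v + r) := by
  constructor
  · rintro ⟨y, hLy, hQ⟩
    classical
    obtain ⟨k, hk, hkmax⟩ : ∃ k, Low g k ∧ ∀ j, Low g j → μ g j * T g j v ≤ μ g k * T g k v := by
      obtain ⟨k0, hk0⟩ := hlow
      obtain ⟨k, hkmem, hmax⟩ := Finset.exists_max_image (Finset.univ.filter fun j => Low g j)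
        (fun j => μ g j * T g j v) ⟨k0, by simp [hk0]⟩
      exact ⟨k, (Finset.mem_filter.mp hkmem).2, fun j hj => hmax j (by simp [hj])⟩
    have hyk : μ g k * T g k v ≤ y := by
      have hq := hQ k
      rw [Q, if_pos hk.1] at hq
      rw [Int.sign_eq_neg_one_iff_neg.mpr hk.2] at hq
      linarith
    set G := μ g k * T g k v with hG
    set q := (y - G) / D g with hqdef
    set r := (y - G) % D g with hr
    have hD := D_pos g
    have h0 : 0 ≤ r := Int.emod_nonneg _ (ne_of_gt hD)
    have h1 : r < D g := Int.emod_lt_of_pos _ hD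
    have hqe : y - G = D g * q + r := (Int.mul_ediv_add_emod _ _).symm
    have hq0 : 0 ≤ q := Int.ediv_nonneg (by linarith) hD.le
    have hler : r ≤ y - G := by nlinarith
    have hdvd : D g ∣ y - (G + r) := ⟨q, by linarith⟩
    refine ⟨k, hk, r, h0, h1, ?_, ?_⟩
    · have h2 : L g ∣ y - (G + r) := dvd_trans (L_dvd_D g) hdvd
      have h3 := dvd_sub hLy h2
      simpa using h3
    · intro j
      have hqj := hQ j
      cases hgi : (g j).ineq
      · simp only [Q, hgi, Bool.false_eq_true, ↓reduceIte] at hqj ⊢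
        have hdd : μ g j * (g j).d ∣ (E g j).sign * ((G + r) - y) :=
          Dvd.dvd.mul_left ((μd_dvd_D g j).trans
            (by rw [show (G + r) - y = -(y - (G + r)) by ring]; exact dvd_neg.mpr hdvd)) _
        have heq : (E g j).sign * (G + r) + μ g j * T g j v
            = ((E g j).sign * y + μ g j * T g j v) + (E g j).sign * ((G + r) - y) := by ring
        rw [heq]
        exact dvd_add hqj hdd
      · simp only [Q, hgi, ↓reduceIte] at hqj ⊢
        rcases lt_trichotomy (E g j) 0 with hE | hE | hE
        · rw [Int.sign_eq_neg_one_iff_neg.mpr hE] at hqj ⊢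
          have := hkmax j ⟨hgi, hE⟩
          linarith
        · rw [hE, Int.sign_zero] at hqj ⊢
          linarith
        · rw [Int.sign_eq_one_iff_pos.mpr hE] at hqj ⊢
          linarith
  · rintro ⟨k, _, r, _, _, hdL, hQs⟩
    exact ⟨_, hdL, hQs⟩

/-- Substituted constraint for the "no lower bound" case. -/
def QB (j : κ) (v : β → ℤ) (r : ℤ) : Prop :=
  if (g j).ineq then (E g j = 0 → μ g j * T g j v ≤ 0)
  else μ g j * (g j).d ∣ (E g j).sign * r + μ g j * T g j v

theorem cooper_neg (v : β → ℤ) (hlow : ¬ ∃ k, Low g k) :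
    (∃ y, L g ∣ y ∧ ∀ j, Q g j v y) ↔
      ∃ r : ℤ, 0 ≤ r ∧ r < D g ∧ L g ∣ r ∧ ∀ j, QB g j v r := by
  have hlow' : ∀ k, (g k).ineq = true → 0 ≤ E g k :=
    fun k hk => not_lt.mp fun h => hlow ⟨k, hk, h⟩
  have hD := D_pos g
  constructor
  · rintro ⟨y, hLy, hQ⟩
    refine ⟨y % D g, Int.emod_nonneg _ hD.ne', Int.emod_lt_of_pos _ hD, ?_, ?_⟩
    · have hdvd : D g ∣ y - y % D g :=
        ⟨y / D g, by have := Int.mul_ediv_add_emod y (D g); linarith⟩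
      have h2 : L g ∣ y - y % D g := (L_dvd_D g).trans hdvd
      have := dvd_sub hLy h2
      simpa using this
    · intro j
      have hqj := hQ j
      cases hgi : (g j).ineq
      · simp only [Q, hgi, Bool.false_eq_true, ↓reduceIte] at hqj
        simp only [QB, hgi, Bool.false_eq_true, ↓reduceIte]
        have hdvd : D g ∣ y - y % D g :=
          ⟨y / D g, by have := Int.mul_ediv_add_emod y (D g); linarith⟩
        have hdd : μ g j * (g j).d ∣ (E g j).sign * (y % D g - y) :=
          Dvd.dvd.mul_left ((μd_dvd_D g j).trans
            (by rw [show y % D g - y = -(y - y % D g) by ring]; exact dvd_neg.mpr hdvd)) _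
        have heq : (E g j).sign * (y % D g) + μ g j * T g j v
            = ((E g j).sign * y + μ g j * T g j v) + (E g j).sign * (y % D g - y) := by ring
        rw [heq]
        exact dvd_add hqj hdd
      · simp only [Q, hgi, ↓reduceIte] at hqj
        simp only [QB, hgi, ↓reduceIte]
        intro hE0
        rw [hE0, Int.sign_zero] at hqj
        linarith
  · rintro ⟨r, h0, h1, hLr, hQB⟩
    obtain ⟨b, hb⟩ : ∃ b : ℤ, ∀ j, (g j).ineq = true → E g j ≠ 0 → b ≤ -(μ g j * T g j v) := by
      rcases isEmpty_or_nonempty κ with hk | hk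
      · exact ⟨0, fun j => (IsEmpty.elim hk j)⟩
      · classical
        refine ⟨Finset.univ.inf' Finset.univ_nonempty (fun j => -(μ g j * T g j v)),
          fun j _ _ => Finset.inf'_le _ (Finset.mem_univ j)⟩
    set m := max 0 (r - b) with hm
    set y := r - D g * m with hy
    have hm0 : 0 ≤ m := le_max_left _ _
    have hyb : y ≤ b := by
      rcases le_or_gt r b with h | h
      · nlinarith
      · have hm' : m = r - b := max_eq_right (by linarith)
        have h2 : m ≤ D g * m := by nlinarith
        rw [hy]
        omega
    have hDm : D g ∣ r - y := ⟨m, by rw [hy]; ring⟩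
    refine ⟨y, ?_, ?_⟩
    · have h2 : L g ∣ D g * m := Dvd.dvd.mul_right (L_dvd_D g) m
      rw [hy]
      exact dvd_sub hLr h2
    · intro j
      cases hgi : (g j).ineq
      · have hqb := hQB j
        simp only [QB, hgi, Bool.false_eq_true, ↓reduceIte] at hqb
        simp only [Q, hgi, Bool.false_eq_true, ↓reduceIte]
        have hdd : μ g j * (g j).d ∣ (E g j).sign * (y - r) :=
          Dvd.dvd.mul_left ((μd_dvd_D g j).trans
            (by rw [show y - r = -(r - y) by ring]; exact dvd_neg.mpr hDm)) _
        have heq : (E g j).sign * y + μ g j * T g j v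
            = ((E g j).sign * r + μ g j * T g j v) + (E g j).sign * (y - r) := by ring
        rw [heq]
        exact dvd_add hqb hdd
      · simp only [Q, hgi, ↓reduceIte]
        rcases eq_or_ne (E g j) 0 with hE | hE
        · have hqb := hQB j
          simp only [QB, hgi, ↓reduceIte] at hqb
          rw [hE, Int.sign_zero]
          have := hqb hE
          linarith
        · have hEpos : 0 < E g j := lt_of_le_of_ne (hlow' j hgi) (Ne.symm hE)
          rw [Int.sign_eq_one_iff_pos.mpr hEpos]
          have := hb j hgi hE
          linarith

end Cooper
end Cooper2

section Cooper3
namespace Cooper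

variable {β κ : Type} [Fintype β] [Fintype κ] (g : κ → GenData (β ⊕ Unit))

theorem pres_low (k : κ) : Pres β {v | Low g k} := by
  by_cases hk : Low g k
  · exact Pres.univ.congr (by ext v; simp [hk])
  · exact Pres.empty.congr (by ext v; simp [hk])

theorem pres_lin_cg (k : κ) (r : ℤ) : Pres β {v | L g ∣ μ g k * T g k v + r} :=
  (Pres.cg (L_pos g).ne' (fun i => μ g k * ((g k).a ∘ Sum.inl) i) (μ g k * (g k).c + r)).congr
    (by
      ext v
      simp only [Set.mem_setOf_eq, aeval_smul]
      rfl)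

theorem pres_Q_subst (k j : κ) (r : ℤ) :
    Pres β {v | Q g j v (μ g k * T g k v + r)} := by
  have key : ∀ v : β → ℤ,
      aeval (fun i => ((E g j).sign * μ g k) * ((g k).a ∘ Sum.inl) i
          + μ g j * ((g j).a ∘ Sum.inl) i)
        (((E g j).sign * μ g k) * (g k).c + μ g j * (g j).c + (E g j).sign * r) v
      = (E g j).sign * (μ g k * T g k v + r) + μ g j * T g j v := by
    intro v
    rw [aeval_combine]
    simp only [T]
    ring
  cases hgi : (g j).ineq
  · refine (Pres.cg (μd_ne g j)
      (fun i => ((E g j).sign * μ g k) * ((g k).a ∘ Sum.inl) i + μ g j * ((g j).a ∘ Sum.inl) i)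
      (((E g j).sign * μ g k) * (g k).c + μ g j * (g j).c + (E g j).sign * r)).congr ?_
    ext v
    simp only [Set.mem_setOf_eq, key, Q, hgi, Bool.false_eq_true, ↓reduceIte]
  · refine (Pres.hs
      (fun i => ((E g j).sign * μ g k) * ((g k).a ∘ Sum.inl) i + μ g j * ((g j).a ∘ Sum.inl) i)
      (((E g j).sign * μ g k) * (g k).c + μ g j * (g j).c + (E g j).sign * r)).congr ?_
    ext v
    simp only [Set.mem_setOf_eq, key, Q, hgi, ↓reduceIte]

theorem pres_QB (j : κ) (r : ℤ) : Pres β {v | QB g j v r} := by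
  have key : ∀ v : β → ℤ,
      aeval (fun i => μ g j * ((g j).a ∘ Sum.inl) i) (μ g j * (g j).c + (E g j).sign * r) v
      = (E g j).sign * r + μ g j * T g j v := by
    intro v
    rw [aeval_smul]
    simp only [T]
    ring
  cases hgi : (g j).ineq
  · refine (Pres.cg (μd_ne g j)
      (fun i => μ g j * ((g j).a ∘ Sum.inl) i)
      (μ g j * (g j).c + (E g j).sign * r)).congr ?_
    ext v
    simp only [Set.mem_setOf_eq, key, QB, hgi, Bool.false_eq_true, ↓reduceIte]
  · rcases eq_or_ne (E g j) 0 with hE | hE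
    · have key0 : ∀ v : β → ℤ,
          aeval (fun i => μ g j * ((g j).a ∘ Sum.inl) i) (μ g j * (g j).c + 0) v
          = μ g j * T g j v := by
        intro v
        rw [aeval_smul]
        simp only [T]
        ring
      refine (Pres.hs (fun i => μ g j * ((g j).a ∘ Sum.inl) i) (μ g j * (g j).c + 0)).congr ?_
      ext v
      simp only [Set.mem_setOf_eq, key0, QB, hgi, ↓reduceIte]
      constructor
      · intro h _; exact h
      · intro h; exact h hE
    · exact Pres.univ.congr (by
        ext v
        simp only [Set.mem_univ, true_iff, QB, hgi, ↓reduceIte, Set.mem_setOf_eq]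
        intro h
        exact absurd h hE)

theorem pres_proj_cell :
    Pres β {v | ∃ z, ∀ j, (Sum.elim v fun _ => z) ∈ (g j).toSet} := by
  have hDpos := D_pos g
  have hDt := Int.toNat_of_nonneg hDpos.le
  by_cases hlow : ∃ k, Low g k
  · have hset : {v : β → ℤ | ∃ z, ∀ j, (Sum.elim v fun _ => z) ∈ (g j).toSet}
        = ⋃ (k : κ), ⋃ (r : Fin (D g).toNat),
            ({v | Low g k} ∩ ({v | L g ∣ μ g k * T g k v + (r : ℤ)}
              ∩ ⋂ j, {v | Q g j v (μ g k * T g k v + (r : ℤ))})) := by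
      ext v
      rw [Set.mem_setOf_eq, step1 g v, cooper_pos g v hlow]
      simp only [Set.mem_iUnion, Set.mem_inter_iff, Set.mem_iInter, Set.mem_setOf_eq]
      constructor
      · rintro ⟨k, hk, r, h0, h1, hdL, hQs⟩
        have hrD : r.toNat < (D g).toNat := by omega
        have hcast : (((⟨r.toNat, hrD⟩ : Fin (D g).toNat) : ℕ) : ℤ) = r := by
          simp only [Fin.val_mk]
          omega
        refine ⟨k, ⟨r.toNat, hrD⟩, hk, ?_, ?_⟩
        · rw [hcast]; exact hdL
        · intro j; rw [hcast]; exact hQs j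
      · rintro ⟨k, r, hk, hdL, hQs⟩
        refine ⟨k, hk, (r : ℤ), by positivity, ?_, hdL, hQs⟩
        have := r.2
        omega
    rw [hset]
    exact Pres.iUnion fun k => Pres.iUnion fun r =>
      (pres_low g k).inter ((pres_lin_cg g k (r : ℤ)).inter
        (Pres.iInter fun j => pres_Q_subst g k j (r : ℤ)))
  · have hset : {v : β → ℤ | ∃ z, ∀ j, (Sum.elim v fun _ => z) ∈ (g j).toSet}
        = ⋃ (r : Fin (D g).toNat),
            ({v | L g ∣ ((r : ℤ) : ℤ)} ∩ ⋂ j, {v | QB g j v (r : ℤ)}) := by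
      ext v
      rw [Set.mem_setOf_eq, step1 g v, cooper_neg g v hlow]
      simp only [Set.mem_iUnion, Set.mem_inter_iff, Set.mem_iInter, Set.mem_setOf_eq]
      constructor
      · rintro ⟨r, h0, h1, hdL, hQs⟩
        have hrD : r.toNat < (D g).toNat := by omega
        have hcast : (((⟨r.toNat, hrD⟩ : Fin (D g).toNat) : ℕ) : ℤ) = r := by
          simp only [Fin.val_mk]
          omega
        refine ⟨⟨r.toNat, hrD⟩, ?_, ?_⟩
        · rw [hcast]; exact hdL
        · intro j; rw [hcast]; exact hQs j
      · rintro ⟨r, hdL, hQs⟩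
        refine ⟨(r : ℤ), by positivity, ?_, hdL, hQs⟩
        have := r.2
        omega
    rw [hset]
    refine Pres.iUnion fun r => Pres.inter ?_ (Pres.iInter fun j => pres_QB g j (r : ℤ))
    exact (Pres.cg (L_pos g).ne' (fun _ => 0) (r : ℤ)).congr
      (by ext v; simp only [Set.mem_setOf_eq, aeval_const])

end Cooper

theorem pres_proj {β : Type} [Fintype β] {X : Set ((β ⊕ Unit) → ℤ)}
    (h : Pres (β ⊕ Unit) X) :
    Pres β {v | ∃ z, Sum.elim v (fun _ => z) ∈ X} := by
  obtain ⟨ι, hι, κ, hκ, g, rfl⟩ := pres_dnf h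
  haveI := hι
  haveI : ∀ i, Finite (κ i) := hκ
  have hset : {v : β → ℤ | ∃ z, Sum.elim v (fun _ => z) ∈ ⋃ i, ⋂ j, (g i j).toSet}
      = ⋃ i, {v | ∃ z, ∀ j, Sum.elim v (fun _ => z) ∈ (g i j).toSet} := by
    ext v
    simp only [Set.mem_setOf_eq, Set.mem_iUnion, Set.mem_iInter]
    exact ⟨fun ⟨z, i, hz⟩ => ⟨i, z, hz⟩, fun ⟨i, z, hz⟩ => ⟨z, i, hz⟩⟩
  rw [hset]
  refine Pres.iUnion fun i => ?_
  haveI := Fintype.ofFinite (κ i)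
  exact Cooper.pres_proj_cell (g i)

end Cooper3

section EP

def EvPeriodic' (A : Set ℤ) : Prop :=
  ∃ n : ℤ, 0 < n ∧ ∃ m m' : ℤ,
    (∀ k : ℤ, m ≤ k → (k ∈ A ↔ k + n ∈ A)) ∧
    (∀ k : ℤ, k ≤ m' → (k ∈ A ↔ k - n ∈ A))

theorem evp_iter_up {A : Set ℤ} {n m : ℤ} (hn : 0 < n)
    (h : ∀ k : ℤ, m ≤ k → (k ∈ A ↔ k + n ∈ A)) (j : ℕ) :
    ∀ k : ℤ, m ≤ k → (k ∈ A ↔ k + n * j ∈ A) := by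
  induction j with
  | zero => simp
  | succ j ih =>
    intro k hk
    have h1 := h k hk
    have h2 := ih (k + n) (by linarith)
    rw [show ((j + 1 : ℕ) : ℤ) = (j : ℤ) + 1 from by push_cast; ring,
      show k + n * ((j : ℤ) + 1) = k + n + n * j by ring]
    exact h1.trans h2

theorem evp_iter_down {A : Set ℤ} {n m' : ℤ} (hn : 0 < n)
    (h : ∀ k : ℤ, k ≤ m' → (k ∈ A ↔ k - n ∈ A)) (j : ℕ) :
    ∀ k : ℤ, k ≤ m' → (k ∈ A ↔ k - n * j ∈ A) := by
  induction j with
  | zero => simp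
  | succ j ih =>
    intro k hk
    have h1 := h k hk
    have h2 := ih (k - n) (by linarith)
    rw [show ((j + 1 : ℕ) : ℤ) = (j : ℤ) + 1 from by push_cast; ring,
      show k - n * ((j : ℤ) + 1) = k - n - n * j by ring]
    exact h1.trans h2

theorem EvPeriodic'.congr {A B : Set ℤ} (h : A = B) (hA : EvPeriodic' A) : EvPeriodic' B :=
  h ▸ hA

theorem EvPeriodic'.compl {A : Set ℤ} (hA : EvPeriodic' A) : EvPeriodic' Aᶜ := by
  obtain ⟨n, hn, m, m', h, h'⟩ := hA
  exact ⟨n, hn, m, m', fun k hk => not_iff_not.mpr (h k hk),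
    fun k hk => not_iff_not.mpr (h' k hk)⟩

theorem EvPeriodic'.union {A B : Set ℤ} (hA : EvPeriodic' A) (hB : EvPeriodic' B) :
    EvPeriodic' (A ∪ B) := by
  obtain ⟨n1, hn1, m1, m1', h1, h1'⟩ := hA
  obtain ⟨n2, hn2, m2, m2', h2, h2'⟩ := hB
  have hc1 : n1 * (n2.toNat : ℤ) = n1 * n2 := by rw [Int.toNat_of_nonneg hn2.le]
  have hc2 : n2 * (n1.toNat : ℤ) = n1 * n2 := by rw [Int.toNat_of_nonneg hn1.le]; ring
  refine ⟨n1 * n2, mul_pos hn1 hn2, max m1 m2, min m1' m2', ?_, ?_⟩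
  · intro k hk
    have e1 := evp_iter_up hn1 h1 n2.toNat k (le_trans (le_max_left _ _) hk)
    have e2 := evp_iter_up hn2 h2 n1.toNat k (le_trans (le_max_right _ _) hk)
    rw [hc1] at e1
    rw [hc2] at e2
    exact or_congr e1 e2
  · intro k hk
    have e1 := evp_iter_down hn1 h1' n2.toNat k (le_trans hk (min_le_left _ _))
    have e2 := evp_iter_down hn2 h2' n1.toNat k (le_trans hk (min_le_right _ _))
    rw [hc1] at e1
    rw [hc2] at e2
    exact or_congr e1 e2

theorem ep_hs_pos {a c : ℤ} (ha : 0 < a) : EvPeriodic' {z : ℤ | a * z + c ≤ 0} := by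
  refine ⟨1, one_pos, |c| + 1, -(|c| + 1), ?_, ?_⟩
  · intro k hk
    have key : ∀ z : ℤ, |c| + 1 ≤ z → ¬ (a * z + c ≤ 0) := by
      intro z hz h
      have h1 : z ≤ a * z := by
        nlinarith [mul_nonneg (by linarith : (0:ℤ) ≤ a - 1) (by linarith [abs_nonneg c] : (0:ℤ) ≤ z)]
      have h2 : -z ≤ c - 1 := by have := neg_abs_le c; linarith
      linarith
    simp only [Set.mem_setOf_eq]
    constructor
    · intro h; exact absurd h (key k hk)
    · intro h; exact absurd h (key (k + 1) (by linarith))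
  · intro k hk
    have key : ∀ z : ℤ, z ≤ -(|c| + 1) → a * z + c ≤ 0 := by
      intro z hz
      have h1 : a * z ≤ z := by
        nlinarith [mul_nonpos_of_nonneg_of_nonpos (by linarith : (0:ℤ) ≤ a - 1)
          (by linarith [abs_nonneg c] : z ≤ 0)]
      have h2 : c ≤ |c| := le_abs_self c
      linarith
    simp only [Set.mem_setOf_eq]
    exact ⟨fun _ => key _ (by linarith), fun _ => key _ hk⟩

theorem ep_hs (a c : ℤ) : EvPeriodic' {z : ℤ | a * z + c ≤ 0} := by
  rcases lt_trichotomy a 0 with ha | ha | ha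
  · have : {z : ℤ | a * z + c ≤ 0} = {z : ℤ | (-a) * z + (1 - c) ≤ 0}ᶜ := by
      ext z
      simp only [Set.mem_setOf_eq, Set.mem_compl_iff]
      have : (-a) * z = -(a * z) := by ring
      omega
    rw [this]
    exact (ep_hs_pos (by linarith)).compl
  · subst ha
    refine ⟨1, one_pos, 0, 0, fun k _ => ?_, fun k _ => ?_⟩ <;> simp
  · exact ep_hs_pos ha

theorem ep_cg {d : ℤ} (hd : d ≠ 0) (a c : ℤ) : EvPeriodic' {z : ℤ | d ∣ a * z + c} := by
  have hdd : d ∣ a * |d| := Dvd.dvd.mul_left ((dvd_abs d d).mpr dvd_rfl) a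
  refine ⟨|d|, abs_pos.mpr hd, 0, 0, ?_, ?_⟩
  · intro k _
    simp only [Set.mem_setOf_eq]
    rw [show a * (k + |d|) + c = (a * k + c) + a * |d| by ring]
    constructor
    · intro h; exact dvd_add h hdd
    · intro h; have := dvd_sub h hdd; simpa using this
  · intro k _
    simp only [Set.mem_setOf_eq]
    rw [show a * (k - |d|) + c = (a * k + c) - a * |d| by ring]
    constructor
    · intro h; exact dvd_sub h hdd
    · intro h; have := dvd_add h hdd; simpa using this

theorem ep_of_pres {X : Set (Fin 1 → ℤ)} (h : Pres (Fin 1) X) :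
    EvPeriodic' {z : ℤ | (fun _ => z) ∈ X} := by
  induction h with
  | gen g =>
    rcases g with ⟨i, d, hd, a, c⟩
    have haeval : ∀ z : ℤ, aeval a c (fun _ => z) = a 0 * z + c := by
      intro z
      simp [aeval, Fin.sum_univ_one]
    cases i
    · exact (ep_cg hd (a 0) c).congr (by
        ext z
        simp [GenData.toSet, haeval, Bool.false_eq_true])
    · exact (ep_hs (a 0) c).congr (by
        ext z
        simp [GenData.toSet, haeval])
  | compl _ ih => exact ih.compl.congr (by ext z; simp)
  | union _ _ ih1 ih2 => exact (ih1.union ih2).congr (by ext z; simp)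

end EP

section Translation

open FirstOrder.Language

abbrev LZ : FirstOrder.Language := Log[[(Set.univ : Set ℤ)]]

theorem aeval_sub {α : Type} [Fintype α] (a b : α → ℤ) (c d : ℤ) (v : α → ℤ) :
    aeval (fun i => a i - b i) (c - d) v = aeval a c v - aeval b d v := by
  unfold aeval
  simp only [sub_mul]
  rw [Finset.sum_sub_distrib]
  ring

theorem term_affine {γ : Type} [Fintype γ] (t : LZ.Term γ) :
    ∃ (a : γ → ℤ) (c : ℤ), ∀ v : γ → ℤ, t.realize v = aeval a c v := by
  induction t with
  | var i =>
    classical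
    refine ⟨fun j => if j = i then 1 else 0, 0, fun v => ?_⟩
    have : Term.realize v (Term.var i : LZ.Term γ) = v i := rfl
    rw [this]
    simp [aeval, ite_mul, Finset.sum_ite_eq']
  | @func l f ts ih =>
    rcases f with f | f
    · cases f with
      | zero =>
        refine ⟨fun _ => 0, 0, fun v => ?_⟩
        have : Term.realize v (Term.func (Sum.inl OagFunc.zero) ts : LZ.Term γ) = 0 := rfl
        rw [this]
        simp [aeval]
      | neg =>
        obtain ⟨a, c, h⟩ := ih 0
        refine ⟨fun i => -1 * a i, -1 * c + 0, fun v => ?_⟩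
        rw [aeval_smul]
        have : Term.realize v (Term.func (Sum.inl OagFunc.neg) ts : LZ.Term γ)
            = -(Term.realize v (ts 0)) := rfl
        rw [this, h]
        ring
      | add =>
        obtain ⟨a₁, c₁, h₁⟩ := ih 0
        obtain ⟨a₂, c₂, h₂⟩ := ih 1
        refine ⟨fun i => 1 * a₁ i + 1 * a₂ i, 1 * c₁ + 1 * c₂ + 0, fun v => ?_⟩
        rw [aeval_combine]
        have : Term.realize v (Term.func (Sum.inl OagFunc.add) ts : LZ.Term γ)
            = (Term.realize v (ts 0)) + (Term.realize v (ts 1)) := rfl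
        rw [this, h₁, h₂]
        ring
    · cases l with
      | zero =>
        refine ⟨fun _ => 0, (f : ℤ), fun v => ?_⟩
        have : Term.realize v (Term.func (Sum.inr f) ts : LZ.Term γ) = (f : ℤ) := rfl
        rw [this, aeval_const]
      | succ n => exact isEmptyElim f

/-- The equivalence used to pull off the last bound variable. -/
def sumEquiv (k : ℕ) : ((Fin 1 ⊕ Fin k) ⊕ Unit) ≃ (Fin 1 ⊕ Fin (k + 1)) where
  toFun := Sum.elim (Sum.map id Fin.castSucc) (fun _ => Sum.inr (Fin.last k))
  invFun := Sum.elim (fun x => Sum.inl (Sum.inl x))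
    (fun j => Fin.lastCases (Sum.inr ()) (fun j' => Sum.inl (Sum.inr j')) j)
  left_inv := by
    rintro ((x | j) | u)
    · rfl
    · simp
    · simp
  right_inv := by
    rintro (x | j)
    · rfl
    · refine Fin.lastCases ?_ ?_ j
      · simp
      · intro j'
        simp

theorem val_inl (k : ℕ) (p : Fin 1 ⊕ Fin k → ℤ) (z : ℤ) :
    (fun i => ((Sum.elim p fun _ : Unit => z) ∘ ⇑(sumEquiv k).symm) (Sum.inl i))
      = fun i => p (Sum.inl i) := by
  funext i
  simp [sumEquiv]

theorem val_inr (k : ℕ) (p : Fin 1 ⊕ Fin k → ℤ) (z : ℤ) :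
    (fun j => ((Sum.elim p fun _ : Unit => z) ∘ ⇑(sumEquiv k).symm) (Sum.inr j))
      = Fin.snoc (fun j => p (Sum.inr j)) z := by
  funext j
  refine Fin.lastCases ?_ ?_ j
  · simp [sumEquiv]
  · intro j'
    simp [sumEquiv]

theorem formula_pres (k : ℕ) (φ : LZ.BoundedFormula (Fin 1) k) :
    Pres (Fin 1 ⊕ Fin k) {p : Fin 1 ⊕ Fin k → ℤ |
      φ.Realize (fun i => p (Sum.inl i)) (fun j => p (Sum.inr j))} := by
  induction φ with
  | falsum =>
    exact Pres.empty.congr (by ext p; exact iff_of_false (Set.notMem_empty p) (fun h => h))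
  | @equal n t₁ t₂ =>
    obtain ⟨a₁, c₁, h₁⟩ := term_affine t₁
    obtain ⟨a₂, c₂, h₂⟩ := term_affine t₂
    refine ((Pres.hs (fun i => a₁ i - a₂ i) (c₁ - c₂)).inter
      (Pres.hs (fun i => a₂ i - a₁ i) (c₂ - c₁))).congr ?_
    ext p
    have hp : Sum.elim (fun i => p (Sum.inl i)) (fun j => p (Sum.inr j)) = p :=
      funext (by rintro (i | j) <;> rfl)
    have hr : (BoundedFormula.equal t₁ t₂ : LZ.BoundedFormula (Fin 1) n).Realize
        (fun i => p (Sum.inl i)) (fun j => p (Sum.inr j)) ↔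
        t₁.realize (Sum.elim (fun i => p (Sum.inl i)) (fun j => p (Sum.inr j)))
          = t₂.realize (Sum.elim (fun i => p (Sum.inl i)) (fun j => p (Sum.inr j))) := Iff.rfl
    simp only [Set.mem_inter_iff, Set.mem_setOf_eq, hr, hp, h₁, h₂, aeval_sub]
    omega
  | @rel n l R ts =>
    rcases R with R | R
    · cases R
      obtain ⟨a₁, c₁, h₁⟩ := term_affine (ts 0)
      obtain ⟨a₂, c₂, h₂⟩ := term_affine (ts 1)
      refine (Pres.hs (fun i => a₁ i - a₂ i) (c₁ - c₂ + 1)).congr ?_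
      ext p
      have hp : Sum.elim (fun i => p (Sum.inl i)) (fun j => p (Sum.inr j)) = p :=
        funext (by rintro (i | j) <;> rfl)
      have hr : (BoundedFormula.rel (Sum.inl OagRel.lt) ts : LZ.BoundedFormula (Fin 1) n).Realize
          (fun i => p (Sum.inl i)) (fun j => p (Sum.inr j)) ↔
          (ts 0).realize (Sum.elim (fun i => p (Sum.inl i)) (fun j => p (Sum.inr j)))
            < (ts 1).realize (Sum.elim (fun i => p (Sum.inl i)) (fun j => p (Sum.inr j))) :=
        Iff.rfl
      have hshift : aeval (fun i => a₁ i - a₂ i) (c₁ - c₂ + 1) p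
          = aeval (fun i => a₁ i - a₂ i) (c₁ - c₂) p + 1 := by
        rw [show c₁ - c₂ = (c₁ - c₂ + 1) - 1 by ring, aeval_shift]
        ring
      simp only [Set.mem_setOf_eq, hr, hp, h₁, h₂, hshift, aeval_sub]
      omega
    · exact isEmptyElim R
  | @imp n f₁ f₂ ih₁ ih₂ =>
    refine ((ih₁.inter ih₂.compl).compl).congr ?_
    ext p
    have hr : (f₁.imp f₂).Realize (fun i => p (Sum.inl i)) (fun j => p (Sum.inr j)) ↔
        (f₁.Realize (fun i => p (Sum.inl i)) (fun j => p (Sum.inr j)) →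
          f₂.Realize (fun i => p (Sum.inl i)) (fun j => p (Sum.inr j))) := Iff.rfl
    simp only [Set.mem_compl_iff, Set.mem_inter_iff, Set.mem_setOf_eq, hr]
    tauto
  | @all n f ih =>
    have h1 := (ih.compl).reindex (sumEquiv n).symm
    have h2 := pres_proj h1
    refine h2.compl.congr ?_
    ext p
    have hr : (f.all).Realize (fun i => p (Sum.inl i)) (fun j => p (Sum.inr j)) ↔
        ∀ z : ℤ, f.Realize (fun i => p (Sum.inl i))
          (Fin.snoc (fun j => p (Sum.inr j)) z) := Iff.rfl
    simp only [Set.mem_compl_iff, Set.mem_setOf_eq, not_exists, hr]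
    constructor
    · intro h z
      have := h z
      rw [val_inl, val_inr] at this
      simpa using this
    · intro h z
      rw [val_inl, val_inr]
      simp only [not_not]
      exact h z

end Translation

/-- Every subset of `ℤ` definable with parameters in `(ℤ,<,+)` is eventually periodic. -/
theorem stmt_14 (A : Set ℤ) (h : Set.Definable₁ (Set.univ : Set ℤ) Log A) :
    EvPeriodic A := by
  obtain ⟨φ, hφ⟩ := h
  have h0 := formula_pres 0 φ
  have h1 := h0.reindex (Equiv.sumEmpty (Fin 1) (Fin 0))
  have h2 := ep_of_pres h1
  have key : {z : ℤ | (fun _ : Fin 1 => z) ∈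
      {w : Fin 1 → ℤ | w ∘ ⇑(Equiv.sumEmpty (Fin 1) (Fin 0)) ∈
        {p : Fin 1 ⊕ Fin 0 → ℤ |
          FirstOrder.Language.BoundedFormula.Realize φ
            (fun i => p (Sum.inl i)) (fun j => p (Sum.inr j))}}} = A := by
    ext z
    have hz := Set.ext_iff.mp hφ (fun _ => z)
    simp only [Set.mem_setOf_eq] at hz ⊢
    rw [show (fun j : Fin 0 =>
        ((fun _ : Fin 1 => z) ∘ ⇑(Equiv.sumEmpty (Fin 1) (Fin 0))) (Sum.inr j))
        = (default : Fin 0 → ℤ) from funext fun j => j.elim0]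
    rw [show (fun i : Fin 1 =>
        ((fun _ : Fin 1 => z) ∘ ⇑(Equiv.sumEmpty (Fin 1) (Fin 0))) (Sum.inl i))
        = (fun _ : Fin 1 => z) from rfl]
    unfold FirstOrder.Language.Formula.Realize at hz
    have goal := hz.symm
    convert goal using 2
  obtain ⟨n, hn, m, m', hu, hd⟩ := key ▸ h2
  exact ⟨n, hn, m, m', hu, hd⟩
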